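/- Let n ≥ 3, let 0 < p < p' < ∞ and assume 1 < p'. Then there exists a Hermitian n×n complex matrix A such that for no natural number K and no Hermitian n×n complex matrices B_1, …, B_K does the identity |A ⊗ₖ 1 − 1 ⊗ₖ Aᵀ|^{p'} = Σ_{k=1}^K |B_k ⊗ₖ 1 − 1 ⊗ₖ B_kᵀ|^p hold. (For dim H ≥ 3 and p < p' with p' > 1, C_p(H) does not contain C_{p'}(H).) -/

import Mathlib

open Kronecker Matrix Polynomial
open scoped ComplexOrder

/-! ### Auxiliary lemmas -/

section Aux

variable {m : Type*} [Fintype m] [DecidableEq m]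

private lemma costop_conj_pow_unitary (V M : Matrix m m ℂ) (h1 : Vᴴ * V = 1)
    (h2 : V * Vᴴ = 1) (k : ℕ) :
    (V * M * Vᴴ) ^ k = V * M ^ k * Vᴴ := by
  induction k with
  | zero => simp [h2]
  | succ k ih =>
      rw [pow_succ, ih, pow_succ]
      calc V * M ^ k * Vᴴ * (V * M * Vᴴ) = V * M ^ k * (Vᴴ * V) * M * Vᴴ := by
            simp only [Matrix.mul_assoc]
        _ = V * (M ^ k * M) * Vᴴ := by
            rw [h1]; simp only [Matrix.mul_assoc, Matrix.mul_one, Matrix.one_mul]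

private lemma costop_aeval_unitary_conj (V : Matrix m m ℂ) (h1 : Vᴴ * V = 1) (h2 : V * Vᴴ = 1)
    (M : Matrix m m ℂ) (q : ℝ[X]) :
    aeval (V * M * Vᴴ) q = V * aeval M q * Vᴴ := by
  induction q using Polynomial.induction_on with
  | C c =>
      simp [Algebra.algebraMap_eq_smul_one, Matrix.mul_smul, Matrix.smul_mul, h2]
  | add f g hf hg => simp [map_add, hf, hg, Matrix.mul_add, Matrix.add_mul]
  | monomial k c ih =>
      simp only [_root_.map_mul, map_pow, aeval_C, aeval_X, costop_conj_pow_unitary V M h1 h2,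
        Algebra.algebraMap_eq_smul_one, smul_mul_assoc, Matrix.one_mul, Matrix.mul_smul,
        Matrix.smul_mul]

private lemma costop_aeval_diagonal (v : m → ℂ) (q : ℝ[X]) :
    aeval (diagonal v) q = diagonal (fun i => aeval (v i) q) := by
  induction q using Polynomial.induction_on with
  | C c =>
      simp only [aeval_C, Algebra.algebraMap_eq_smul_one, ← Matrix.diagonal_one,
        ← Matrix.diagonal_smul]
      congr 1
  | add f g hf hg => simp [map_add, hf, hg, diagonal_add]
  | monomial k c ih =>
      simp only [_root_.map_mul, map_pow, aeval_C, aeval_X, diagonal_pow,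
        Algebra.algebraMap_eq_smul_one, smul_mul_assoc, one_mul, ← Matrix.diagonal_smul]
      simp [Pi.smul_def]

private lemma costop_isHermitian_conj_diag (V : Matrix m m ℂ) (d : m → ℝ) :
    (V * diagonal (fun i => (d i : ℂ)) * Vᴴ).IsHermitian := by
  unfold Matrix.IsHermitian
  rw [conjTranspose_mul, conjTranspose_mul, conjTranspose_conjTranspose,
    diagonal_conjTranspose, Matrix.mul_assoc]
  congr 2
  ext i
  simp [Pi.star_def]

/-- Functional calculus through an explicit unitary diagonalization. -/
private lemma costop_cfc_unitary_conj_diag (V : Matrix m m ℂ)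
    (hV : V ∈ Matrix.unitaryGroup m ℂ) (d : m → ℝ) (f : ℝ → ℝ) :
    cfc f (V * diagonal (fun i => (d i : ℂ)) * Vᴴ)
      = V * diagonal (fun i => (f (d i) : ℂ)) * Vᴴ := by
  have h1 : Vᴴ * V = 1 := by simpa [star_eq_conjTranspose] using hV.1
  have h2 : V * Vᴴ = 1 := by simpa [star_eq_conjTranspose] using hV.2
  set M := V * diagonal (fun i => (d i : ℂ)) * Vᴴ with hM
  have hsa : IsSelfAdjoint M := costop_isHermitian_conj_diag V d
  have hspec : spectrum ℝ M ⊆ Set.range d := by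
    intro x hx
    have hx' : (x : ℂ) ∈ spectrum ℂ M := by
      rw [← spectrum.algebraMap_mem_iff ℂ] at hx
      exact hx
    rw [hM] at hx'
    have hrw : (V * diagonal (fun i => (d i : ℂ)) * Vᴴ)
        = (⟨V, hV⟩ : Matrix.unitaryGroup m ℂ) * diagonal (fun i => (d i : ℂ))
          * (star (⟨V, hV⟩ : Matrix.unitaryGroup m ℂ) : Matrix m m ℂ) := rfl
    rw [hrw, Unitary.spectrum_star_right_conjugate, spectrum_diagonal] at hx'
    obtain ⟨i, hi⟩ := hx'
    exact ⟨i, Complex.ofReal_inj.mp (by simpa using hi)⟩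
  classical
  set s : Finset ℝ := Finset.image d Finset.univ with hs
  set q : ℝ[X] := Lagrange.interpolate s id f with hq
  have hqf : ∀ x ∈ s, q.eval x = f x := fun x hx =>
    Lagrange.eval_interpolate_at_node f (Set.injOn_id _) hx
  have hmem : ∀ i, d i ∈ s := fun i => Finset.mem_image_of_mem d (Finset.mem_univ i)
  have h1' : cfc f M = cfc (fun x => q.eval x) M := by
    apply cfc_congr
    intro x hx
    exact (hqf x (by obtain ⟨i, rfl⟩ := hspec hx; exact hmem i)).symm
  rw [h1', cfc_polynomial q M hsa, hM, costop_aeval_unitary_conj V h1 h2,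
    costop_aeval_diagonal]
  have key : (fun i => aeval ((d i : ℂ)) q) = fun i => ((f (d i) : ℂ)) := by
    funext i
    rw [show ((d i : ℂ)) = algebraMap ℝ ℂ (d i) from rfl,
      aeval_algebraMap_apply_eq_algebraMap_eval]
    simp [hqf (d i) (hmem i)]
  rw [key]

private lemma costop_kron_conjTranspose (X Y : Matrix m m ℂ) : (X ⊗ₖ Y)ᴴ = Xᴴ ⊗ₖ Yᴴ := by
  ext ⟨i,j⟩ ⟨k,l⟩
  simp [conjTranspose_apply, kroneckerMap_apply, mul_comm]

private lemma costop_diagonal_sub (u v : m → ℂ) :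
    diagonal u - diagonal v = diagonal (fun i => u i - v i) := by
  ext i j
  rcases eq_or_ne i j with rfl | h
  · simp [Matrix.sub_apply]
  · simp [Matrix.sub_apply, Matrix.diagonal_apply_ne _ h]

/-- Explicit unitary diagonalization of `B ⊗ₖ 1 - 1 ⊗ₖ Bᵀ` for a Hermitian `B`. -/
private lemma costop_delta_decomp {B : Matrix m m ℂ} (hB : B.IsHermitian) :
    ∃ W : Matrix (m × m) (m × m) ℂ,
      (Wᴴ * W = 1 ∧ W * Wᴴ = 1) ∧
      (∀ i k j l, W (i,j) (k,l) =
        (hB.eigenvectorUnitary : Matrix m m ℂ) i k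
          * star ((hB.eigenvectorUnitary : Matrix m m ℂ) j l)) ∧
      B ⊗ₖ (1 : Matrix m m ℂ) - (1 : Matrix m m ℂ) ⊗ₖ Bᵀ
        = W * diagonal (fun kl : m × m =>
            ((hB.eigenvalues kl.1 - hB.eigenvalues kl.2 : ℝ) : ℂ)) * Wᴴ := by
  classical
  set Uc : Matrix m m ℂ := (hB.eigenvectorUnitary : Matrix m m ℂ) with hUc
  have hU1 : Ucᴴ * Uc = 1 := by
    simpa [star_eq_conjTranspose] using hB.eigenvectorUnitary.2.1
  have hU2 : Uc * Ucᴴ = 1 := by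
    simpa [star_eq_conjTranspose] using hB.eigenvectorUnitary.2.2
  set Vc : Matrix m m ℂ := Ucᴴᵀ with hVc
  have hVH : Vcᴴ = Ucᵀ := by
    ext i j
    simp [hVc, conjTranspose_apply, transpose_apply]
  have hV1 : Vcᴴ * Vc = 1 := by
    rw [hVH, hVc, ← transpose_mul, hU1, transpose_one]
  have hV2 : Vc * Vcᴴ = 1 := by
    rw [hVH, hVc, ← transpose_mul, hU2, transpose_one]
  set D : Matrix m m ℂ := diagonal (RCLike.ofReal ∘ hB.eigenvalues) with hD
  have hBspec : B = Uc * D * Ucᴴ := by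
    rw [hUc, hD]
    simpa [star_eq_conjTranspose] using hB.spectral_theorem
  have hDt : Dᵀ = D := diagonal_transpose _
  have hBt : Bᵀ = Vc * D * Vcᴴ := by
    rw [hBspec, transpose_mul, transpose_mul, hDt, ← hVc, ← hVH, Matrix.mul_assoc]
  refine ⟨Uc ⊗ₖ Vc, ⟨?_, ?_⟩, ?_, ?_⟩
  · rw [costop_kron_conjTranspose, ← mul_kronecker_mul, hU1, hV1, one_kronecker_one]
  · rw [costop_kron_conjTranspose, ← mul_kronecker_mul, hU2, hV2, one_kronecker_one]
  · intro i k j l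
    simp [kroneckerMap_apply, hVc, conjTranspose_apply]
  · have e1 : B ⊗ₖ (1 : Matrix m m ℂ)
        = (Uc ⊗ₖ Vc) * (D ⊗ₖ (1 : Matrix m m ℂ)) * (Uc ⊗ₖ Vc)ᴴ := by
      rw [costop_kron_conjTranspose, ← mul_kronecker_mul, ← mul_kronecker_mul, ← hBspec]
      rw [Matrix.mul_one, hV2]
    have e2 : (1 : Matrix m m ℂ) ⊗ₖ Bᵀ
        = (Uc ⊗ₖ Vc) * ((1 : Matrix m m ℂ) ⊗ₖ D) * (Uc ⊗ₖ Vc)ᴴ := by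
      rw [costop_kron_conjTranspose, ← mul_kronecker_mul, ← mul_kronecker_mul, ← hBt]
      rw [Matrix.mul_one, hU2]
    rw [e1, e2, ← Matrix.sub_mul, ← Matrix.mul_sub]
    congr 2
    rw [show (1 : Matrix m m ℂ) = diagonal (fun _ => (1:ℂ)) from (diagonal_one).symm]
    rw [hD, diagonal_kronecker_diagonal, diagonal_kronecker_diagonal, costop_diagonal_sub]
    congr 1
    funext kl
    simp

private lemma costop_star_mul_normSq (z : ℂ) : z * star z = (Complex.normSq z : ℂ) :=
  Complex.mul_conj z

private lemma costop_conj_diag_entry (W : Matrix m m ℂ) (v : m → ℝ) (x : m) :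
    (W * Matrix.diagonal (fun y => (v y : ℂ)) * Wᴴ) x x
      = ((∑ y, v y * Complex.normSq (W x y) : ℝ) : ℂ) := by
  rw [Matrix.mul_apply]
  push_cast
  apply Finset.sum_congr rfl
  intro y _
  rw [Matrix.mul_diagonal, conjTranspose_apply]
  rw [mul_comm (W x y) ((v y : ℂ)), mul_assoc, costop_star_mul_normSq]

private lemma costop_row_sum_one {W : Matrix m m ℂ} (h2 : W * Wᴴ = 1) (x : m) :
    ∑ y, Complex.normSq (W x y) = 1 := by
  have h := congrFun (congrFun h2 x) x
  rw [Matrix.mul_apply] at h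
  simp only [conjTranspose_apply, costop_star_mul_normSq] at h
  rw [Matrix.one_apply_eq] at h
  exact_mod_cast h

private lemma costop_real_rpow_add_le {x y p : ℝ} (hx : 0 ≤ x) (hy : 0 ≤ y) (hp : 0 ≤ p)
    (hp1 : p ≤ 1) : (x + y) ^ p ≤ x ^ p + y ^ p := by
  have h := NNReal.rpow_add_le_add_rpow x.toNNReal y.toNNReal hp hp1
  have h' := (NNReal.coe_le_coe).mpr h
  simpa [NNReal.coe_rpow, NNReal.coe_add, Real.coe_toNNReal _ hx,
    Real.coe_toNNReal _ hy] using h'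

/-- Weighted Minkowski-type inequality with exponent `max p 1`. -/
private lemma costop_mink {J : Type*} [Fintype J] (μ X Y Z : J → ℝ) (hμ : ∀ j, 0 ≤ μ j)
    (hX : ∀ j, 0 ≤ X j) (hY : ∀ j, 0 ≤ Y j) (hZ : ∀ j, 0 ≤ Z j)
    (hZXY : ∀ j, Z j ≤ X j + Y j) {p : ℝ} (hp : 0 < p) :
    (∑ j, μ j * Z j ^ p) ^ (1 / max p 1) ≤
      (∑ j, μ j * X j ^ p) ^ (1 / max p 1) + (∑ j, μ j * Y j ^ p) ^ (1 / max p 1) := by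
  have step1 : ∑ j, μ j * Z j ^ p ≤ ∑ j, μ j * (X j + Y j) ^ p := by
    apply Finset.sum_le_sum
    intro j _
    exact mul_le_mul_of_nonneg_left
      (Real.rpow_le_rpow (hZ j) (hZXY j) hp.le) (hμ j)
  have hZs : 0 ≤ ∑ j, μ j * Z j ^ p :=
    Finset.sum_nonneg fun j _ => mul_nonneg (hμ j) (Real.rpow_nonneg (hZ j) p)
  rcases le_or_gt p 1 with hple | hpgt
  · rw [max_eq_right hple]
    simp only [div_one, Real.rpow_one]
    refine step1.trans ?_
    rw [← Finset.sum_add_distrib]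
    apply Finset.sum_le_sum
    intro j _
    rw [← mul_add]
    exact mul_le_mul_of_nonneg_left
      (costop_real_rpow_add_le (hX j) (hY j) hp.le hple) (hμ j)
  · rw [max_eq_left hpgt.le]
    set f : J → ℝ := fun j => μ j ^ (1/p) * X j with hf
    set g : J → ℝ := fun j => μ j ^ (1/p) * Y j with hg
    have hfn : ∀ j ∈ Finset.univ, 0 ≤ f j := fun j _ =>
      mul_nonneg (Real.rpow_nonneg (hμ j) _) (hX j)
    have hgn : ∀ j ∈ Finset.univ, 0 ≤ g j := fun j _ =>
      mul_nonneg (Real.rpow_nonneg (hμ j) _) (hY j)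
    have key : ∀ j (W : ℝ), 0 ≤ W → (μ j ^ (1/p) * W) ^ p = μ j * W ^ p := by
      intro j W hW
      rw [Real.mul_rpow (Real.rpow_nonneg (hμ j) _) hW, ← Real.rpow_mul (hμ j),
        one_div_mul_cancel hp.ne', Real.rpow_one]
    have hfp : ∀ j, f j ^ p = μ j * X j ^ p := fun j => key j (X j) (hX j)
    have hgp : ∀ j, g j ^ p = μ j * Y j ^ p := fun j => key j (Y j) (hY j)
    have hfgp : ∀ j, (f j + g j) ^ p = μ j * (X j + Y j) ^ p := by
      intro j
      rw [hf, hg]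
      simp only
      rw [← mul_add]
      exact key j (X j + Y j) (add_nonneg (hX j) (hY j))
    have minkow := Real.Lp_add_le_of_nonneg (p := p) (s := Finset.univ)
      (f := f) (g := g) hpgt.le hfn hgn
    calc (∑ j, μ j * Z j ^ p) ^ (1/p)
        ≤ (∑ j, (f j + g j) ^ p) ^ (1/p) := by
          apply Real.rpow_le_rpow hZs _ (by positivity)
          refine step1.trans (le_of_eq ?_)
          exact Finset.sum_congr rfl fun j _ => (hfgp j).symm
      _ ≤ (∑ j, f j ^ p) ^ (1/p) + (∑ j, g j ^ p) ^ (1/p) := minkow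
      _ = _ := by
          rw [Finset.sum_congr rfl fun j _ => hfp j, Finset.sum_congr rfl fun j _ => hgp j]

end Aux
open Kronecker Matrix
open scoped ComplexOrder

/-- `costOp p A` is the cost operator `|A ⊗ₖ 1 - 1 ⊗ₖ Aᵀ|^p`, where `|·|^p` is the
functional calculus applied with `x ↦ |x| ^ p` (real rpow). -/
noncomputable def costOp {n : ℕ} (p : ℝ) (A : Matrix (Fin n) (Fin n) ℂ) :
    Matrix (Fin n × Fin n) (Fin n × Fin n) ℂ :=
  cfc (fun x : ℝ => |x| ^ p)
    (A ⊗ₖ (1 : Matrix (Fin n) (Fin n) ℂ) - (1 : Matrix (Fin n) (Fin n) ℂ) ⊗ₖ Aᵀ)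

/-- For `dim H ≥ 3` and `p < p'` with `p' > 1`, `C_p(H)` does not contain `C_{p'}(H)`:
some `p'`-cost operator is not a sum of `p`-cost operators. -/
theorem p_cost_not_superset {n : ℕ} (hn : 3 ≤ n) (p p' : ℝ)
    (hp : 0 < p) (hpp' : p < p') (hp'1 : 1 < p') :
    ∃ A : Matrix (Fin n) (Fin n) ℂ, A.IsHermitian ∧
      ¬ ∃ (K : ℕ) (B : Fin K → Matrix (Fin n) (Fin n) ℂ),
          (∀ k, (B k).IsHermitian) ∧
          costOp p' A = ∑ k, costOp p (B k) := by
  classical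
  set q : ℝ := max p 1 with hqdef
  have hq1 : 1 ≤ q := le_max_right _ _
  have hq0 : 0 < q := lt_of_lt_of_le one_pos hq1
  have hqp' : q < p' := max_lt hpp' hp'1
  let i0 : Fin n := ⟨0, by omega⟩
  let i1 : Fin n := ⟨1, by omega⟩
  let i2 : Fin n := ⟨2, by omega⟩
  set c : Fin n → ℝ := fun i => if i.1 = 0 then 0 else if i.1 = 1 then 1 else 2 with hc
  set A : Matrix (Fin n) (Fin n) ℂ := diagonal (fun i => (c i : ℂ)) with hA
  have hAH : A.IsHermitian := by
    unfold Matrix.IsHermitian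
    rw [hA, diagonal_conjTranspose]
    congr 1
    funext i
    simp [Pi.star_def]
  refine ⟨A, hAH, ?_⟩
  rintro ⟨K, B, hBH, heq⟩
  -- the left-hand side is diagonal
  have hAt : Aᵀ = A := by rw [hA, diagonal_transpose]
  have hΔA : A ⊗ₖ (1 : Matrix (Fin n) (Fin n) ℂ) - (1 : Matrix (Fin n) (Fin n) ℂ) ⊗ₖ Aᵀ
      = diagonal (fun kl : Fin n × Fin n => ((c kl.1 - c kl.2 : ℝ) : ℂ)) := by
    rw [hAt, hA]
    rw [show (1 : Matrix (Fin n) (Fin n) ℂ) = diagonal (fun _ : Fin n => (1:ℂ)) from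
      diagonal_one.symm]
    rw [diagonal_kronecker_diagonal, diagonal_kronecker_diagonal, costop_diagonal_sub]
    congr 1
    funext kl
    simp
  have hL : costOp p' A
      = diagonal (fun kl : Fin n × Fin n => ((|c kl.1 - c kl.2| ^ p' : ℝ) : ℂ)) := by
    unfold costOp
    rw [hΔA]
    have h1 := costop_cfc_unitary_conj_diag (m := Fin n × Fin n) 1 (one_mem _)
      (fun kl => c kl.1 - c kl.2) (fun x => |x| ^ p')
    simpa [Matrix.one_mul, conjTranspose_one, Matrix.mul_one] using h1
  -- decompose the right-hand side terms
  choose W hWu hWentry hWdecomp using fun k => costop_delta_decomp (hBH k)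
  set β : Fin K → Fin n → ℝ := fun k => (hBH k).eigenvalues with hβ
  set Uk : Fin K → Matrix (Fin n) (Fin n) ℂ :=
    fun k => ((hBH k).eigenvectorUnitary : Matrix (Fin n) (Fin n) ℂ) with hUk
  set mq : Fin K → Fin n → Fin n → ℝ := fun k i κ => Complex.normSq (Uk k i κ) with hmq
  have hWm : ∀ k, W k ∈ Matrix.unitaryGroup (Fin n × Fin n) ℂ := by
    intro k
    constructor
    · simpa [star_eq_conjTranspose] using (hWu k).1
    · simpa [star_eq_conjTranspose] using (hWu k).2
  have hcost : ∀ k, costOp p (B k)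
      = W k * diagonal (fun kl : Fin n × Fin n =>
          ((|β k kl.1 - β k kl.2| ^ p : ℝ) : ℂ)) * (W k)ᴴ := by
    intro k
    unfold costOp
    rw [hWdecomp k]
    exact costop_cfc_unitary_conj_diag (W k) (hWm k)
      (fun kl => β k kl.1 - β k kl.2) (fun x => |x| ^ p)
  set t : Fin K → Fin n → Fin n → ℝ := fun k i j =>
    ∑ a : Fin n, ∑ b : Fin n, (mq k i a * mq k j b) * |β k a - β k b| ^ p with ht
  have hentry : ∀ (k : Fin K) (i j : Fin n),
      costOp p (B k) (i,j) (i,j) = ((t k i j : ℝ) : ℂ) := by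
    intro k i j
    rw [hcost k, costop_conj_diag_entry]
    congr 1
    rw [Fintype.sum_prod_type]
    apply Finset.sum_congr rfl
    intro a _
    apply Finset.sum_congr rfl
    intro b _
    rw [hWentry k i a j b, Complex.normSq_mul, show ∀ z : ℂ, Complex.normSq (star z) = Complex.normSq z from fun z => Complex.normSq_conj z]
    ring
  have hE : ∀ i j : Fin n, |c i - c j| ^ p' = ∑ k, t k i j := by
    intro i j
    have h := congrFun (congrFun heq ((i,j))) ((i,j))
    rw [hL, diagonal_apply_eq, Matrix.sum_apply] at h
    rw [Finset.sum_congr rfl (fun k _ => hentry k i j), ← Complex.ofReal_sum] at h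
    exact_mod_cast h
  have hc0 : c i0 = 0 := by simp [hc, i0]
  have hc1 : c i1 = 1 := by simp [hc, i1]
  have hc2 : c i2 = 2 := by simp [hc, i2]
  have E01 : (1:ℝ) = ∑ k, t k i0 i1 := by
    have h := hE i0 i1
    rw [hc0, hc1] at h
    norm_num at h
    exact h
  have E12 : (1:ℝ) = ∑ k, t k i1 i2 := by
    have h := hE i1 i2
    rw [hc1, hc2] at h
    norm_num at h
    exact h
  have E02 : (2:ℝ) ^ p' = ∑ k, t k i0 i2 := by
    have h := hE i0 i2
    rw [hc0, hc2] at h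
    norm_num at h
    exact h
  -- row sums of the unistochastic weights
  have hrow : ∀ (k : Fin K) (i : Fin n), ∑ a : Fin n, mq k i a = 1 := by
    intro k i
    apply costop_row_sum_one (W := Uk k) _ i
    simpa [star_eq_conjTranspose] using (hBH k).eigenvectorUnitary.2.2
  have hmqn : ∀ k i a, 0 ≤ mq k i a := fun k i a => Complex.normSq_nonneg _
  -- the big index set
  set μ : (Fin K × Fin n × Fin n × Fin n) → ℝ :=
    fun j => mq j.1 i0 j.2.1 * mq j.1 i1 j.2.2.1 * mq j.1 i2 j.2.2.2 with hμdef
  set X : (Fin K × Fin n × Fin n × Fin n) → ℝ :=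
    fun j => |β j.1 j.2.1 - β j.1 j.2.2.1| with hXdef
  set Y : (Fin K × Fin n × Fin n × Fin n) → ℝ :=
    fun j => |β j.1 j.2.2.1 - β j.1 j.2.2.2| with hYdef
  set Z : (Fin K × Fin n × Fin n × Fin n) → ℝ :=
    fun j => |β j.1 j.2.1 - β j.1 j.2.2.2| with hZdef
  have sumJ : ∀ G : (Fin K × Fin n × Fin n × Fin n) → ℝ,
      ∑ j, G j = ∑ k, ∑ a, ∑ b, ∑ d, G (k, a, b, d) := by
    intro G
    rw [Fintype.sum_prod_type]
    refine Finset.sum_congr rfl fun k _ => ?_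
    rw [Fintype.sum_prod_type]
    exact Finset.sum_congr rfl fun a _ => Fintype.sum_prod_type _
  have S1 : ∑ j, μ j * X j ^ p = ∑ k, t k i0 i1 := by
    rw [sumJ]
    refine Finset.sum_congr rfl fun k _ => ?_
    rw [ht]
    refine Finset.sum_congr rfl fun a _ => ?_
    refine Finset.sum_congr rfl fun b _ => ?_
    have inner : ∑ d, μ (k, a, b, d) * X (k, a, b, d) ^ p
        = (∑ d, mq k i2 d) * ((mq k i0 a * mq k i1 b) * |β k a - β k b| ^ p) := by
      rw [Finset.sum_mul]
      refine Finset.sum_congr rfl fun d _ => ?_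
      simp only [hμdef, hXdef]
      ring
    rw [inner, hrow, one_mul]
  have S2 : ∑ j, μ j * Y j ^ p = ∑ k, t k i1 i2 := by
    rw [sumJ]
    refine Finset.sum_congr rfl fun k _ => ?_
    rw [ht]
    have inner : ∀ a, ∑ b, ∑ d, μ (k, a, b, d) * Y (k, a, b, d) ^ p
        = mq k i0 a * ∑ b, ∑ d, (mq k i1 b * mq k i2 d) * |β k b - β k d| ^ p := by
      intro a
      rw [Finset.mul_sum]
      refine Finset.sum_congr rfl fun b _ => ?_
      rw [Finset.mul_sum]
      refine Finset.sum_congr rfl fun d _ => ?_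
      simp only [hμdef, hYdef]
      ring
    rw [Finset.sum_congr rfl fun a _ => inner a, ← Finset.sum_mul, hrow, one_mul]
  have S3 : ∑ j, μ j * Z j ^ p = ∑ k, t k i0 i2 := by
    rw [sumJ]
    refine Finset.sum_congr rfl fun k _ => ?_
    rw [ht]
    have swap : ∀ a, ∑ b, ∑ d, μ (k, a, b, d) * Z (k, a, b, d) ^ p
        = ∑ d, (mq k i0 a * mq k i2 d) * |β k a - β k d| ^ p := by
      intro a
      have inner : ∀ b, ∑ d, μ (k, a, b, d) * Z (k, a, b, d) ^ p
          = mq k i1 b * ∑ d, (mq k i0 a * mq k i2 d) * |β k a - β k d| ^ p := by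
        intro b
        rw [Finset.mul_sum]
        refine Finset.sum_congr rfl fun d _ => ?_
        simp only [hμdef, hZdef]
        ring
      rw [Finset.sum_congr rfl fun b _ => inner b, ← Finset.sum_mul, hrow, one_mul]
    exact Finset.sum_congr rfl fun a _ => swap a
  -- Minkowski-type inequality
  have MK := costop_mink μ X Y Z
    (fun j => mul_nonneg (mul_nonneg (hmqn _ _ _) (hmqn _ _ _)) (hmqn _ _ _))
    (fun j => abs_nonneg _) (fun j => abs_nonneg _) (fun j => abs_nonneg _)
    (fun j => abs_sub_le _ _ _) hp
  rw [S1, S2, S3, ← E01, ← E12, ← E02] at MK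
  rw [Real.one_rpow] at MK
  have h2q : ((2:ℝ) ^ p') ^ (1 / max p 1) = (2:ℝ) ^ (p' * (1 / q)) := by
    rw [Real.rpow_mul (by norm_num : (0:ℝ) ≤ 2), hqdef]
  rw [h2q] at MK
  have hle : p' * (1 / q) ≤ 1 := by
    have h22 : (2:ℝ) ^ (p' * (1 / q)) ≤ (2:ℝ) ^ (1:ℝ) := by
      rw [Real.rpow_one]
      linarith
    exact (Real.rpow_le_rpow_left_iff (by norm_num : (1:ℝ) < 2)).mp h22
  rw [mul_one_div, div_le_one hq0] at hle
  linarith
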